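/- Let n ≥ 1, μ > 0, let f : ℝⁿ → ℝ be twice continuously differentiable, and fix v, u ∈ ℝⁿ. Define the directional smoothing g(x) = (1/(2μ)) ∫_{−μ}^{μ} f(x + t•v) dt. Then for every p ∈ ℝⁿ, the function λ ↦ g(p + λ•u) is twice differentiable at λ = 0 and its second derivative there equals (1/(2μ)) ∫_{−μ}^{μ} D²f(p + t•v)[u, u] dt, where D²f(q)[u,u] denotes the second directional derivative of f at q along u (the second derivative at 0 of λ ↦ f(q + λ•u)). -/

import Mathlib

open MeasureTheory

open Metric intervalIntegral

lemma gw_hasDerivAt_comp_line {E : Type*} [NormedAddCommGroup E] [NormedSpace ℝ E]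
    (f : E → ℝ) (hf : Differentiable ℝ f) (u q : E) (lam : ℝ) :
    HasDerivAt (fun x : ℝ => f (q + x • u)) ((fderiv ℝ f (q + lam • u)) u) lam := by
  have h := (hf _).hasFDerivAt.comp_hasDerivAt lam
    (((hasDerivAt_id lam).smul_const u).const_add q)
  simp only [one_smul, id] at h
  exact h

lemma gw_key {E : Type*} [NormedAddCommGroup E] [NormedSpace ℝ E]
    (f : E → ℝ) (hf : ContDiff ℝ 1 f) (v u p : E) (μ x₀ : ℝ) :
    HasDerivAt (fun lam : ℝ => ∫ t in (-μ)..μ, f (p + t • v + lam • u))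
      (∫ t in (-μ)..μ, (fderiv ℝ f (p + t • v + x₀ • u)) u) x₀ := by
  set F : ℝ → ℝ → ℝ := fun lam t => f (p + t • v + lam • u) with hF
  set F' : ℝ → ℝ → ℝ := fun lam t => (fderiv ℝ f (p + t • v + lam • u)) u with hF'
  have hdiff : ∀ (t lam : ℝ), HasDerivAt (fun x => F x t) (F' lam t) lam := by
    intro t lam
    exact gw_hasDerivAt_comp_line f (hf.differentiable one_ne_zero) u (p + t • v) lam
  have hK : IsCompact ((fun q : ℝ × ℝ => p + q.1 • v + q.2 • u) ''
      (Set.uIcc (-μ) μ ×ˢ closedBall x₀ 1)) :=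
    ((isCompact_uIcc.prod (isCompact_closedBall _ _)).image (by fun_prop))
  have hcont : Continuous fun y : E => (fderiv ℝ f y) u :=
    (ContinuousLinearMap.apply ℝ ℝ u).continuous.comp (hf.continuous_fderiv one_ne_zero)
  obtain ⟨C, hC⟩ := hK.exists_bound_of_continuousOn hcont.continuousOn
  have main := hasDerivAt_integral_of_dominated_loc_of_deriv_le (F := F) (F' := F')
    (a := -μ) (b := μ) (μ := volume) (bound := fun _ => C) (ball_mem_nhds x₀ one_pos)
    (Filter.Eventually.of_forall fun x =>
      (Continuous.aestronglyMeasurable (hf.continuous.comp (by fun_prop))))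
    (Continuous.intervalIntegrable (hf.continuous.comp (by fun_prop)) _ _)
    (Continuous.aestronglyMeasurable (hcont.comp (by fun_prop)))
    (Filter.Eventually.of_forall fun t ht x hx => by
      apply hC
      exact ⟨(t, x), ⟨Set.uIoc_subset_uIcc ht, ball_subset_closedBall hx⟩, rfl⟩)
    (intervalIntegrable_const)
    (Filter.Eventually.of_forall fun t _ x _ => hdiff t x)
  exact main.2


/-- For `f : ℝⁿ → ℝ` twice continuously differentiable and the directional
Greene–Wu smoothing `g(x) = (1/(2μ)) ∫_{−μ}^{μ} f(x + t•v) dt`, the map `λ ↦ g(p + λ•u)` is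
twice differentiable at `0`, with second derivative there equal to
`(1/(2μ)) ∫_{−μ}^{μ} D²f(p + t•v)[u, u] dt`, where `D²f(q)[u,u]` is the second derivative
at `0` of `λ ↦ f(q + λ•u)`. -/
theorem gw_directional_smoothing_second_deriv
    (n : ℕ) (hn : 1 ≤ n) (μ : ℝ) (hμ : 0 < μ)
    (f : EuclideanSpace ℝ (Fin n) → ℝ) (hf : ContDiff ℝ 2 f)
    (v u : EuclideanSpace ℝ (Fin n))
    (g : EuclideanSpace ℝ (Fin n) → ℝ)
    (hg : ∀ x, g x = (1 / (2 * μ)) * ∫ t in (-μ)..μ, f (x + t • v))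
    (p : EuclideanSpace ℝ (Fin n)) :
    DifferentiableAt ℝ (fun lam : ℝ => g (p + lam • u)) 0 ∧
    DifferentiableAt ℝ (deriv fun lam : ℝ => g (p + lam • u)) 0 ∧
    iteratedDeriv 2 (fun lam : ℝ => g (p + lam • u)) 0
      = (1 / (2 * μ)) *
          ∫ t in (-μ)..μ, iteratedDeriv 2 (fun lam : ℝ => f (p + t • v + lam • u)) 0 := by
  set f₁ : EuclideanSpace ℝ (Fin n) → ℝ := fun y => (fderiv ℝ f y) u with hf₁def
  have hf₁ : ContDiff ℝ 1 f₁ :=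
    (ContinuousLinearMap.apply ℝ ℝ u).contDiff.comp (hf.fderiv_right (by norm_num))
  have hGeq : (fun lam : ℝ => g (p + lam • u))
      = fun lam => (1 / (2 * μ)) * ∫ t in (-μ)..μ, f (p + t • v + lam • u) := by
    funext lam
    rw [hg]
    congr 1
    congr 1
    funext t
    congr 1
    abel
  have hd1 : ∀ lam : ℝ, HasDerivAt (fun x : ℝ => g (p + x • u))
      ((1 / (2 * μ)) * ∫ t in (-μ)..μ, f₁ (p + t • v + lam • u)) lam := by
    intro lam
    rw [hGeq]
    exact (gw_key f (hf.of_le one_le_two) v u p μ lam).const_mul _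
  have hderivG : (deriv fun lam : ℝ => g (p + lam • u))
      = fun lam => (1 / (2 * μ)) * ∫ t in (-μ)..μ, f₁ (p + t • v + lam • u) :=
    funext fun lam => (hd1 lam).deriv
  have hd2 : HasDerivAt (fun lam : ℝ => (1 / (2 * μ)) * ∫ t in (-μ)..μ, f₁ (p + t • v + lam • u))
      ((1 / (2 * μ)) * ∫ t in (-μ)..μ, (fderiv ℝ f₁ (p + t • v + (0:ℝ) • u)) u) 0 :=
    (gw_key f₁ hf₁ v u p μ 0).const_mul _
  refine ⟨(hd1 0).differentiableAt, ?_, ?_⟩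
  · rw [hderivG]; exact hd2.differentiableAt
  · rw [iteratedDeriv_succ, iteratedDeriv_one, hderivG, hd2.deriv]
    congr 1
    apply intervalIntegral.integral_congr
    intro t _
    have hdin : (deriv fun lam : ℝ => f (p + t • v + lam • u))
        = fun lam => f₁ (p + t • v + lam • u) :=
      funext fun lam =>
        (gw_hasDerivAt_comp_line f (hf.differentiable two_ne_zero) u (p + t • v) lam).deriv
    show (fderiv ℝ f₁ (p + t • v + (0:ℝ) • u)) u
        = iteratedDeriv 2 (fun lam : ℝ => f (p + t • v + lam • u)) 0
    rw [iteratedDeriv_succ, iteratedDeriv_one, hdin,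
      (gw_hasDerivAt_comp_line f₁ (hf₁.differentiable one_ne_zero) u (p + t • v) 0).deriv]
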